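/- Equivalence of OMD-forced halfspaces with regret matching⁺: fix η > 0 and define z⁰ = 0 and zᵗ = argmin_{z ∈ ℝⁿ≥0} ⟨−uᵗ, z⟩ + (1/(2η))‖z − zᵗ⁻¹‖₂² for payoff vectors u¹, u², … ∈ ℝⁿ. Then zᵗ = [zᵗ⁻¹ + ηuᵗ]⁺ for all t, and zᵗ = η wᵗ where w⁰ = 0 and wᵗ = [wᵗ⁻¹ + uᵗ]⁺ is the RM⁺ accumulator; consequently zᵗ/‖zᵗ‖₁ = wᵗ/‖wᵗ‖₁ whenever wᵗ ≠ 0, independently of η. -/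

import Mathlib

open scoped InnerProductSpace BigOperators

/-- Componentwise positive part `[w]⁺`. -/
noncomputable def posPart {n : ℕ} (w : EuclideanSpace ℝ (Fin n)) : EuclideanSpace ℝ (Fin n) :=
  WithLp.toLp 2 (fun i => max (w i) 0)

/-- ℓ₁ norm on ℝⁿ. -/
noncomputable def l1 {n : ℕ} (w : EuclideanSpace ℝ (Fin n)) : ℝ := ∑ i, |w i|

private lemma ptwise (η u a x : ℝ) (hη : 0 < η) (hx : 0 ≤ x) :
    -u * max (a + η*u) 0 + 1/(2*η) * ((max (a + η*u) 0 - a)^2 + (x - max (a + η*u) 0)^2)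
    ≤ -u * x + 1/(2*η) * (x - a)^2 := by
  set p := max (a + η*u) 0 with hp
  have h2 : 2*η*(-u*p) + ((p-a)^2 + (x-p)^2) ≤ 2*η*(-u*x) + (x-a)^2 := by
    rcases le_or_gt 0 (a + η*u) with h | h
    · rw [hp, max_eq_left h]; nlinarith [sq_nonneg (x - a - η*u)]
    · rw [hp, max_eq_right h.le]; nlinarith [mul_nonneg hx (neg_nonneg.2 h.le)]
  have h2η : (0:ℝ) < 2*η := by linarith
  calc -u * p + 1/(2*η) * ((p-a)^2 + (x-p)^2)
      = (2*η*(-u*p) + ((p-a)^2 + (x-p)^2)) / (2*η) := by field_simp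
    _ ≤ (2*η*(-u*x) + (x-a)^2) / (2*η) := by gcongr
    _ = -u * x + 1/(2*η) * (x-a)^2 := by field_simp

/-- OMD-forced halfspaces coincide with regret matching⁺. With `z⁰ = 0` and
`zᵗ = argmin_{z ∈ ℝⁿ≥0} ⟨−uᵗ, z⟩ + (1/(2η))‖z − zᵗ⁻¹‖₂²`, one has
`zᵗ = [zᵗ⁻¹ + ηuᵗ]⁺` and `zᵗ = η wᵗ`, where `w⁰ = 0, wᵗ = [wᵗ⁻¹ + uᵗ]⁺` is the RM⁺
accumulator; consequently `zᵗ/‖zᵗ‖₁ = wᵗ/‖wᵗ‖₁` whenever `wᵗ ≠ 0`, independently of `η`. -/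
theorem stmt_19 {n : ℕ} (η : ℝ) (hη : 0 < η)
    (u z w : ℕ → EuclideanSpace ℝ (Fin n))
    (hz0 : z 0 = 0)
    (hz : ∀ t : ℕ, 1 ≤ t → (∀ i, 0 ≤ z t i) ∧
      IsMinOn (fun y : EuclideanSpace ℝ (Fin n) =>
          ⟪-u t, y⟫_ℝ + 1 / (2 * η) * ‖y - z (t - 1)‖ ^ 2)
        {y | ∀ i, 0 ≤ y i} (z t))
    (hw0 : w 0 = 0)
    (hw : ∀ t : ℕ, 1 ≤ t → w t = posPart (w (t - 1) + u t)) :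
    (∀ t : ℕ, 1 ≤ t → z t = posPart (z (t - 1) + η • u t)) ∧
    (∀ t : ℕ, z t = η • w t) ∧
    (∀ t : ℕ, w t ≠ 0 → (l1 (z t))⁻¹ • z t = (l1 (w t))⁻¹ • w t) := by
  have hn : ∀ v : EuclideanSpace ℝ (Fin n), ‖v‖^2 = ∑ i, (v i)^2 := by
    intro v
    rw [EuclideanSpace.norm_eq, Real.sq_sqrt (by positivity)]
    simp [sq_abs]
  have key : ∀ t : ℕ, 1 ≤ t → z t = posPart (z (t - 1) + η • u t) := by
    intro t ht
    obtain ⟨hnn, hmin⟩ := hz t ht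
    set a := z (t - 1) with ha
    set p : EuclideanSpace ℝ (Fin n) := posPart (a + η • u t) with hpdef
    have hpi : ∀ i, p i = max (a i + η * u t i) 0 := by
      intro i; simp [hpdef, _root_.posPart, PiLp.add_apply, PiLp.smul_apply]
    have hpmem : p ∈ {y : EuclideanSpace ℝ (Fin n) | ∀ i, 0 ≤ y i} := by
      intro i; rw [hpi]; exact le_max_right _ _
    have hsum : ⟪-u t, p⟫_ℝ + 1/(2*η) * (‖p - a‖^2 + ‖z t - p‖^2)
        ≤ ⟪-u t, z t⟫_ℝ + 1/(2*η) * ‖z t - a‖^2 := by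
      rw [hn, hn, hn, PiLp.inner_apply, PiLp.inner_apply]
      simp only [RCLike.inner_apply, conj_trivial, PiLp.sub_apply, PiLp.neg_apply]
      rw [← Finset.sum_add_distrib, Finset.mul_sum, Finset.mul_sum,
        ← Finset.sum_add_distrib, ← Finset.sum_add_distrib]
      apply Finset.sum_le_sum
      intro i _
      have := ptwise η (u t i) (a i) (z t i) hη (hnn i)
      rw [hpi i]
      linarith [this]
    have hle := isMinOn_iff.mp hmin p hpmem
    have hz2 : ‖z t - p‖^2 ≤ 0 := by
      have h2η : (0:ℝ) < 1/(2*η) := by positivity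
      nlinarith [hsum, hle, sq_nonneg ‖z t - p‖]
    have : z t - p = 0 := by
      have := sq_nonneg ‖z t - p‖
      have hnorm : ‖z t - p‖ = 0 := by nlinarith
      exact norm_eq_zero.mp hnorm
    have := sub_eq_zero.mp this
    exact this
  have part2 : ∀ t : ℕ, z t = η • w t := by
    intro t
    induction t with
    | zero => simp [hz0, hw0]
    | succ t ih =>
      have h1 := key (t+1) (by omega)
      have h2 := hw (t+1) (by omega)
      simp only [Nat.add_sub_cancel] at h1 h2
      rw [h1, h2, ih]
      ext i
      simp only [_root_.posPart, PiLp.toLp_apply, PiLp.add_apply, PiLp.smul_apply, smul_eq_mul]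
      rw [mul_max_of_nonneg _ _ hη.le, mul_zero, mul_add]
  refine ⟨key, part2, ?_⟩
  intro t hwt
  rw [part2 t]
  have hl1 : l1 (η • w t) = η * l1 (w t) := by
    simp [l1, abs_mul, abs_of_pos hη, Finset.mul_sum]
  rw [hl1, smul_smul, mul_inv]
  congr 1
  rw [mul_comm, ← mul_assoc, mul_inv_cancel₀ hη.ne', one_mul]
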